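/- The denominator q(k) = τk⁶ + (√τ − 2τ)k⁴ − √τ k² + 1 of the third eigenvalue of Q = A·P⁻¹ vanishes for some k ∈ ℝ if and only if τ ≥ 1; the minimal such τ (the critical value τ^♮ = 1) is attained at |k| = 1, since q(k) = 0 is equivalent to √τ = 1/(2k² − k⁴) whenever 0 < k² < 2, and the maximum of 2k² − k⁴ over k ∈ ℝ equals 1, attained at k² = 1. -/

import Mathlib

private lemma q_factor (τ k : ℝ) (hτ : 0 ≤ τ) :
    τ * k ^ 6 + (Real.sqrt τ - 2 * τ) * k ^ 4 - Real.sqrt τ * k ^ 2 + 1 =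
      (1 - Real.sqrt τ * (2 * k ^ 2 - k ^ 4)) * (1 + Real.sqrt τ * k ^ 2) := by
  have h : Real.sqrt τ ^ 2 = τ := Real.sq_sqrt hτ
  linear_combination (2 * k ^ 4 - k ^ 6) * h

theorem stmt_11 :
    let q : ℝ → ℝ → ℝ := fun τ k =>
      τ * k ^ 6 + (Real.sqrt τ - 2 * τ) * k ^ 4 - Real.sqrt τ * k ^ 2 + 1
    (∀ τ : ℝ, 0 < τ → ((∃ k : ℝ, q τ k = 0) ↔ 1 ≤ τ)) ∧
    (∀ τ k : ℝ, 0 < τ → 0 < k ^ 2 → k ^ 2 < 2 →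
      (q τ k = 0 ↔ Real.sqrt τ = 1 / (2 * k ^ 2 - k ^ 4))) ∧
    (∀ k : ℝ, 2 * k ^ 2 - k ^ 4 ≤ 1) ∧
    2 * (1 : ℝ) ^ 2 - (1 : ℝ) ^ 4 = 1 ∧
    q 1 1 = 0 := by
  intro q
  have hbound : ∀ k : ℝ, 2 * k ^ 2 - k ^ 4 ≤ 1 := by
    intro k; nlinarith [sq_nonneg (k ^ 2 - 1)]
  refine ⟨?_, ?_, hbound, by norm_num, ?_⟩
  · intro τ hτ
    have hs : 0 < Real.sqrt τ := Real.sqrt_pos.mpr hτ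
    constructor
    · rintro ⟨k, hk⟩
      rw [show q τ k = _ from q_factor τ k hτ.le] at hk
      have hpos : 0 < 1 + Real.sqrt τ * k ^ 2 := by positivity
      have h1 : 1 - Real.sqrt τ * (2 * k ^ 2 - k ^ 4) = 0 := by
        rcases mul_eq_zero.mp hk with h | h
        · exact h
        · exact absurd h hpos.ne'
      have h2 : Real.sqrt τ * (2 * k ^ 2 - k ^ 4) = 1 := by linarith
      have h3 : 1 ≤ Real.sqrt τ := by
        nlinarith [hbound k, hs]
      nlinarith [Real.sq_sqrt hτ.le]
    · intro h1τ
      have h1s : 1 ≤ Real.sqrt τ := by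
        rw [show (1:ℝ) = Real.sqrt 1 by simp]
        exact Real.sqrt_le_sqrt h1τ
      set s := Real.sqrt τ with hsdef
      have hinv : 1 / s ≤ 1 := by
        rw [div_le_one hs]; exact h1s
      have hinnernn : (0:ℝ) ≤ 1 - 1 / s := by linarith
      have hu : Real.sqrt (1 - 1 / s) ^ 2 = 1 - 1 / s := Real.sq_sqrt hinnernn
      have hule : Real.sqrt (1 - 1 / s) ≤ 1 :=
        Real.sqrt_le_one.mpr (by nlinarith [one_div_pos.mpr hs])
      set u := Real.sqrt (1 - 1 / s) with hudef
      have hknn : (0:ℝ) ≤ 1 - u := by linarith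
      refine ⟨Real.sqrt (1 - u), ?_⟩
      have hk2 : Real.sqrt (1 - u) ^ 2 = 1 - u := Real.sq_sqrt hknn
      show q τ (Real.sqrt (1 - u)) = 0
      rw [show q τ (Real.sqrt (1 - u)) = _ from q_factor τ _ hτ.le]
      have hval : 2 * Real.sqrt (1 - u) ^ 2 - Real.sqrt (1 - u) ^ 4 = 1 / s := by
        have : Real.sqrt (1 - u) ^ 4 = (1 - u) ^ 2 := by
          rw [show (4:ℕ) = 2 * 2 by norm_num, pow_mul, hk2]
        rw [this, hk2]; nlinarith [hu]
      rw [hval]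
      have : s * (1 / s) = 1 := mul_one_div_cancel hs.ne'
      rw [← hsdef, this]; ring
  · intro τ k hτ hk2 hk2'
    have hs : 0 < Real.sqrt τ := Real.sqrt_pos.mpr hτ
    have hd : 0 < 2 * k ^ 2 - k ^ 4 := by nlinarith
    have hpos : 0 < 1 + Real.sqrt τ * k ^ 2 := by positivity
    rw [show q τ k = _ from q_factor τ k hτ.le]
    constructor
    · intro hk
      have h1 : 1 - Real.sqrt τ * (2 * k ^ 2 - k ^ 4) = 0 := by
        rcases mul_eq_zero.mp hk with h | h
        · exact h
        · exact absurd h hpos.ne'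
      rw [eq_div_iff hd.ne']
      linarith
    · intro h
      have : Real.sqrt τ * (2 * k ^ 2 - k ^ 4) = 1 := by
        rw [h]; exact one_div_mul_cancel hd.ne'
      rw [this]; ring
  · show q 1 1 = 0
    simp only [q, Real.sqrt_one]; ring
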